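/- Let F be a finite-dimensional subspace of C¹[a,b] (a < b), let a = x_1 < … < x_n = b, and let D = P⁻¹Q be a closed diagonal-norm F-based SBP operator on these nodes with P = diag(w_1, …, w_n). Then the closed quadrature rule with nodes x_1, …, x_n and weights w_1, …, w_n is positive and exact (with weight function ω = 1) for every element of (FF)' := {(fg)' : f, g ∈ F}; that is, for all f, g ∈ F, Σ_{k=1}^n w_k (fg)'(x_k) = ∫_a^b (fg)'(x) dx = f(b)g(b) − f(a)g(a). -/

import Mathlib

open MeasureTheory Matrix

/-- The boundary matrix `B = diag(-1, 0, …, 0, 1)` of size `(n+1) × (n+1)`. -/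
noncomputable def sbpBoundaryMatrix (n : ℕ) : Matrix (Fin (n + 1)) (Fin (n + 1)) ℝ :=
  Matrix.diagonal fun i => (if i = Fin.last n then (1 : ℝ) else 0) + (if i = 0 then -1 else 0)

/-- A closed diagonal-norm `F`-based SBP operator yields a positive closed
quadrature rule that is exact (with weight function `1`) for every element of
`(FF)' = {(fg)' : f, g ∈ F}`. -/
theorem sbp_operator_yields_exact_quadrature
    (a b : ℝ) (hab : a < b)
    (F : Submodule ℝ (ℝ → ℝ)) (hFC1 : ∀ f ∈ F, ContDiff ℝ 1 f)
    (hFfin : FiniteDimensional ℝ F)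
    (n : ℕ) (x : Fin (n + 1) → ℝ) (hx : StrictMono x)
    (hxa : x 0 = a) (hxb : x (Fin.last n) = b)
    (w : Fin (n + 1) → ℝ) (hw : ∀ k, 0 < w k)
    (Q : Matrix (Fin (n + 1)) (Fin (n + 1)) ℝ)
    (hQ : Q + Qᵀ = sbpBoundaryMatrix n)
    (hD : ∀ f ∈ F, ((Matrix.diagonal w)⁻¹ * Q) *ᵥ (fun k => f (x k)) =
      fun k => deriv f (x k)) :
    ∀ f ∈ F, ∀ g ∈ F,
      (∫ t in a..b, deriv (fun y => f y * g y) t) = f b * g b - f a * g a ∧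
      ∑ k, w k * deriv (fun y => f y * g y) (x k) = f b * g b - f a * g a := by
  intro f hf g hg
  have hf1 := hFC1 f hf
  have hg1 := hFC1 g hg
  have hfd : Differentiable ℝ f := hf1.differentiable one_ne_zero
  have hgd : Differentiable ℝ g := hg1.differentiable one_ne_zero
  have hh1 : ContDiff ℝ 1 (fun y => f y * g y) := hf1.mul hg1
  have hderiv : ∀ t, deriv (fun y => f y * g y) t
      = deriv f t * g t + f t * deriv g t := fun t => deriv_mul (hfd t) (hgd t)
  constructor
  · exact intervalIntegral.integral_deriv_eq_sub
      (fun t _ => (hh1.differentiable one_ne_zero t))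
      ((hh1.continuous_deriv le_rfl).intervalIntegrable a b)
  · have hn0 : (0 : Fin (n+1)) ≠ Fin.last n := by
      intro h
      have : a = b := by rw [← hxa, ← hxb, h]
      exact hab.ne this
    set P := Matrix.diagonal w with hPdef
    have hdet : IsUnit P.det := by
      rw [hPdef, Matrix.det_diagonal, isUnit_iff_ne_zero]
      exact (Finset.prod_pos fun k _ => hw k).ne'
    have key : ∀ u, u ∈ F → Q *ᵥ (fun k => u (x k)) = fun k => w k * deriv u (x k) := by
      intro u hu
      have h1 := hD u hu
      have h2 := congrArg (fun v => P *ᵥ v) h1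
      simp only [Matrix.mulVec_mulVec] at h2
      rw [← Matrix.mul_assoc, Matrix.mul_nonsing_inv _ hdet, Matrix.one_mul] at h2
      rw [h2]
      ext k
      simp [hPdef, Matrix.mulVec_diagonal]
    have hQf := key f hf
    have hQg := key g hg
    have hsum : ∑ k, w k * deriv (fun y => f y * g y) (x k)
        = (fun k => f (x k)) ⬝ᵥ ((Q + Qᵀ) *ᵥ fun k => g (x k)) := by
      rw [Matrix.add_mulVec, dotProduct_add,
        Matrix.dotProduct_mulVec _ Qᵀ, Matrix.vecMul_transpose, hQf, hQg]
      simp only [hderiv, dotProduct]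
      rw [← Finset.sum_add_distrib]
      apply Finset.sum_congr rfl
      intro k _
      ring
    rw [hsum, hQ]
    simp only [sbpBoundaryMatrix, dotProduct, Matrix.mulVec_diagonal,
      add_mul, mul_add, mul_ite, ite_mul, mul_zero, zero_mul, mul_one, one_mul,
      mul_neg, neg_mul, mul_neg_one]
    rw [Finset.sum_add_distrib, Finset.sum_ite_eq' Finset.univ (Fin.last n),
      Finset.sum_ite_eq' Finset.univ (0 : Fin (n+1))]
    simp [hxa, hxb]
    ring
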